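/- Correctness of the two-candidate base case: let q be a vertex of G and v a vertex of H reachable from q in G, assume (i) every directed walk from q to v in G contains a vertex of S, (ii) for every directed walk W from q to v in G the suffix of W beginning at the last occurrence on W of a vertex of S is a walk in H, and take ω(s) = dist_G(q,s). Suppose D : S → ℝ satisfies dist_G(s,v) ≤ D(s) ≤ dist_H(s,v) for all s ∈ S. If v ∈ Vor(s₁) for some s₁ ∈ S, then ω(s₁) + D(s₁) = dist_G(q,v), and ω(s) + D(s) ≥ dist_G(q,v) for every s ∈ S; consequently, for any s₂ ∈ S, min(ω(s₁) + D(s₁), ω(s₂) + D(s₂)) = dist_G(q,v). -/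

import Mathlib

open scoped ENNReal

/-- A finite directed graph on vertex type `V`, with an adjacency relation and
real-valued edge lengths. -/
structure DiGraph (V : Type) where
  Adj : V → V → Prop
  len : V → V → ℝ

namespace DiGraph

variable {V : Type}

/-- `G.IsWalk a b l` : `l` is (the vertex list of) a directed walk from `a` to `b` in `G`. -/
inductive IsWalk (G : DiGraph V) : V → V → List V → Prop
  | single (a : V) : IsWalk G a a [a]
  | cons {a b c : V} {l : List V} (h : G.Adj a b) (hw : IsWalk G b c l) :
      IsWalk G a c (a :: l)

/-- Total length of a walk given by its vertex list. -/
noncomputable def walkLen (G : DiGraph V) : List V → ℝ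
  | a :: b :: l => G.len a b + G.walkLen (b :: l)
  | _ => 0

/-- `dist G a b` : the infimum, in `ℝ≥0∞`, of the lengths of directed walks
from `a` to `b` (`∞` if there is no such walk). -/
noncomputable def dist (G : DiGraph V) (a b : V) : ℝ≥0∞ :=
  sInf {x : ℝ≥0∞ | ∃ l, G.IsWalk a b l ∧ x = ENNReal.ofReal (G.walkLen l)}

/-- The additively weighted distance `d^ω(s,v) = ω(s) + dist_H(s,v)`, valued in `EReal`
so that arbitrary (possibly infinite) additive weights can be accommodated. -/
noncomputable def dOm (H : DiGraph V) (ω : V → EReal) (s v : V) : EReal :=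
  ω s + ((H.dist s v : ℝ≥0∞) : EReal)

/-- The Voronoi cell of a site `s ∈ S`: the set of vertices `v` of `H` such that for all
`s' ∈ S` with `s' ≠ s`, the pair `(d^ω(s,v), −ω(s))` is lexicographically strictly smaller
than `(d^ω(s',v), −ω(s'))`. -/
def Vor (H : DiGraph V) (HV : Set V) (S : Finset V) (ω : V → EReal) (s : V) : Set V :=
  {v ∈ HV | ∀ s' ∈ S, s' ≠ s →
    dOm H ω s v < dOm H ω s' v ∨ (dOm H ω s v = dOm H ω s' v ∧ ω s' < ω s)}

lemma IsWalk.exists_cons {G : DiGraph V} {a b : V} {l : List V} (h : G.IsWalk a b l) :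
    ∃ t, l = a :: t := by
  cases h with
  | single => exact ⟨[], rfl⟩
  | cons h hw => exact ⟨_, rfl⟩

@[simp] lemma walkLen_nil (G : DiGraph V) : G.walkLen [] = 0 := by simp [walkLen]

@[simp] lemma walkLen_single (G : DiGraph V) (a : V) : G.walkLen [a] = 0 := by simp [walkLen]

@[simp] lemma walkLen_cons_cons (G : DiGraph V) (a b : V) (l : List V) :
    G.walkLen (a :: b :: l) = G.len a b + G.walkLen (b :: l) := by simp [walkLen]

lemma walkLen_eq_of_len_eq {G H : DiGraph V} (h : H.len = G.len) :
    ∀ l, H.walkLen l = G.walkLen l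
  | [] => by simp
  | [a] => by simp
  | a :: b :: l => by
      rw [walkLen_cons_cons, walkLen_cons_cons, h, walkLen_eq_of_len_eq h (b :: l)]

lemma walkLen_append (G : DiGraph V) (s : V) (l₂ : List V) :
    ∀ l₁ : List V, G.walkLen (l₁ ++ s :: l₂) = G.walkLen (l₁ ++ [s]) + G.walkLen (s :: l₂)
  | [] => by simp
  | [a] => by simp
  | a :: b :: l₁ => by
      have := walkLen_append G s l₂ (b :: l₁)
      simp only [List.cons_append, walkLen_cons_cons] at this ⊢
      rw [this]; ring

lemma isWalk_split' {G : DiGraph V} {a b : V} {l : List V} (h : G.IsWalk a b l) :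
    ∀ l₁ s l₂, l = l₁ ++ s :: l₂ → G.IsWalk a s (l₁ ++ [s]) ∧ G.IsWalk s b (s :: l₂) := by
  induction h with
  | single a =>
      rintro (_ | ⟨x, t⟩) s l₂ h
      · simp only [List.nil_append, List.cons.injEq] at h
        obtain ⟨rfl, rfl⟩ := h
        exact ⟨IsWalk.single _, IsWalk.single _⟩
      · simp only [List.cons_append, List.cons.injEq] at h
        exact absurd h.2 (by simp)
  | cons hadj hw ih =>
      rintro (_ | ⟨x, t⟩) s l₂ h
      · simp only [List.nil_append, List.cons.injEq] at h
        obtain ⟨rfl, rfl⟩ := h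
        exact ⟨IsWalk.single _, IsWalk.cons hadj hw⟩
      · simp only [List.cons_append, List.cons.injEq] at h
        obtain ⟨rfl, rfl⟩ := h
        obtain ⟨h₁, h₂⟩ := ih t s l₂ rfl
        exact ⟨IsWalk.cons hadj h₁, h₂⟩

lemma isWalk_split {G : DiGraph V} (l₁ : List V) {a b s : V} {l₂ : List V}
    (h : G.IsWalk a b (l₁ ++ s :: l₂)) :
    G.IsWalk a s (l₁ ++ [s]) ∧ G.IsWalk s b (s :: l₂) :=
  isWalk_split' h l₁ s l₂ rfl

lemma isWalk_concat {G : DiGraph V} {a c b : V} {l₂ : List V} (h₂ : G.IsWalk c b l₂)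
    {l₁ : List V} (h₁ : G.IsWalk a c l₁) :
    G.IsWalk a b (l₁ ++ l₂.tail) ∧
      G.walkLen (l₁ ++ l₂.tail) = G.walkLen l₁ + G.walkLen l₂ := by
  induction h₁ with
  | single a =>
      obtain ⟨t, rfl⟩ := h₂.exists_cons
      simpa using h₂
  | cons hadj hw ih =>
      obtain ⟨t, rfl⟩ := hw.exists_cons
      refine ⟨IsWalk.cons hadj (ih h₂).1, ?_⟩
      have h2 := (ih h₂).2
      simp only [List.cons_append, walkLen_cons_cons] at h2 ⊢
      rw [h2]; ring

lemma walkLen_nonneg {G : DiGraph V} (hpos : ∀ a b, G.Adj a b → 0 < G.len a b)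
    {a b : V} {l : List V} (h : G.IsWalk a b l) : 0 ≤ G.walkLen l := by
  induction h with
  | single => simp
  | cons hadj hw ih =>
      obtain ⟨t, rfl⟩ := hw.exists_cons
      simp only [walkLen_cons_cons]
      have := (hpos _ _ hadj).le
      linarith

lemma dist_le {G : DiGraph V} {a b : V} {l : List V} (h : G.IsWalk a b l) :
    G.dist a b ≤ ENNReal.ofReal (G.walkLen l) := sInf_le ⟨l, h, rfl⟩

lemma le_dist {G : DiGraph V} {a b : V} {c : ℝ≥0∞}
    (h : ∀ l, G.IsWalk a b l → c ≤ ENNReal.ofReal (G.walkLen l)) : c ≤ G.dist a b :=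
  le_sInf (by rintro x ⟨l, hl, rfl⟩; exact h l hl)

lemma dist_triangle (G : DiGraph V) (hpos : ∀ a b, G.Adj a b → 0 < G.len a b) (a c b : V) :
    G.dist a b ≤ G.dist a c + G.dist c b := by
  have key : ∀ l₁, G.IsWalk a c l₁ → ∀ l₂, G.IsWalk c b l₂ →
      G.dist a b ≤ ENNReal.ofReal (G.walkLen l₁) + ENNReal.ofReal (G.walkLen l₂) := by
    intro l₁ h₁ l₂ h₂
    obtain ⟨hw, hl⟩ := isWalk_concat h₂ h₁
    calc G.dist a b ≤ ENNReal.ofReal (G.walkLen (l₁ ++ l₂.tail)) := dist_le hw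
      _ = ENNReal.ofReal (G.walkLen l₁ + G.walkLen l₂) := by rw [hl]
      _ = _ := ENNReal.ofReal_add (walkLen_nonneg hpos h₁) (walkLen_nonneg hpos h₂)
  simp only [dist, sInf_eq_iInf]
  rw [ENNReal.iInf_add]
  refine le_iInf fun x => ?_
  rw [ENNReal.iInf_add]
  refine le_iInf fun hx => ?_
  rw [ENNReal.add_iInf]
  refine le_iInf fun y => ?_
  rw [ENNReal.add_iInf]
  refine le_iInf fun hy => ?_
  obtain ⟨l₁, h₁, rfl⟩ := hx
  obtain ⟨l₂, h₂, rfl⟩ := hy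
  exact (le_of_eq sInf_eq_iInf.symm).trans (key l₁ h₁ l₂ h₂)

lemma exists_last_split (S : Set V) :
    ∀ l : List V, (∃ x ∈ l, x ∈ S) →
      ∃ l₁ s l₂, l = l₁ ++ s :: l₂ ∧ s ∈ S ∧ ∀ x ∈ l₂, x ∉ S
  | [], h => by simp at h
  | a :: t, h => by
      by_cases ht : ∃ x ∈ t, x ∈ S
      · obtain ⟨l₁, s, l₂, rfl, hs, hl₂⟩ := exists_last_split S t ht
        exact ⟨a :: l₁, s, l₂, rfl, hs, hl₂⟩
      · push_neg at ht
        have ha : a ∈ S := by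
          obtain ⟨x, hx, hxS⟩ := h
          rcases List.mem_cons.mp hx with rfl | hx
          · exact hxS
          · exact absurd hxS (ht x hx)
        exact ⟨[], a, t, rfl, ha, ht⟩

end DiGraph

/-- Correctness of the two-candidate base case: with `G, H, HV, S` as
usual, `q` a vertex of `G`, `v ∈ HV` reachable from `q` in `G`, hypotheses (i) and (ii)
as in Statement 0, and `ω(s) = dist_G(q,s)`, suppose `D : S → ℝ` satisfies
`dist_G(s,v) ≤ D(s) ≤ dist_H(s,v)` for all `s ∈ S`.  If `v ∈ Vor(s₁)` for some `s₁ ∈ S`,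
then `ω(s₁) + D(s₁) = dist_G(q,v)` and `ω(s) + D(s) ≥ dist_G(q,v)` for every `s ∈ S`;
consequently for any `s₂ ∈ S`,
`min (ω(s₁) + D(s₁)) (ω(s₂) + D(s₂)) = dist_G(q,v)`. -/
theorem stmt5 {V : Type} [Fintype V] (G H : DiGraph V) (HV : Set V) (S : Finset V)
    (hpos : ∀ a b, G.Adj a b → 0 < G.len a b)
    (hsub : ∀ a b, H.Adj a b → G.Adj a b) (hlen : H.len = G.len)
    (hHVedge : ∀ a b, H.Adj a b → a ∈ HV ∧ b ∈ HV)
    (hS : S.Nonempty) (hSH : ↑S ⊆ HV)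
    (q v : V) (hv : v ∈ HV) (hreach : ∃ l, G.IsWalk q v l)
    (hi : ∀ l, G.IsWalk q v l → ∃ s ∈ S, s ∈ l)
    (hii : ∀ l, G.IsWalk q v l → ∀ l₁ s l₂, l = l₁ ++ s :: l₂ → s ∈ S →
      (∀ x ∈ l₂, x ∉ (S : Set V)) → H.IsWalk s v (s :: l₂))
    (ω : V → EReal) (hω : ∀ x, ω x = ((G.dist q x : ℝ≥0∞) : EReal))
    (D : V → ℝ)
    (hD : ∀ s ∈ S, ((G.dist s v : ℝ≥0∞) : EReal) ≤ ((D s : ℝ) : EReal) ∧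
      ((D s : ℝ) : EReal) ≤ ((H.dist s v : ℝ≥0∞) : EReal))
    (s₁ : V) (hs₁ : s₁ ∈ S) (hvor : v ∈ DiGraph.Vor H HV S ω s₁) :
    (ω s₁ + ((D s₁ : ℝ) : EReal) = ((G.dist q v : ℝ≥0∞) : EReal)) ∧
    (∀ s ∈ S, ((G.dist q v : ℝ≥0∞) : EReal) ≤ ω s + ((D s : ℝ) : EReal)) ∧
    (∀ s₂ ∈ S, min (ω s₁ + ((D s₁ : ℝ) : EReal)) (ω s₂ + ((D s₂ : ℝ) : EReal)) =
      ((G.dist q v : ℝ≥0∞) : EReal)) := by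
  classical
  set e : V → ℝ≥0∞ := fun s => G.dist q s + H.dist s v with he
  have hdOm : ∀ s, DiGraph.dOm H ω s v = ((e s : ℝ≥0∞) : EReal) := by
    intro s
    rw [DiGraph.dOm, hω, he, EReal.coe_ennreal_add]
  have hvor' : ∀ s ∈ S, e s₁ ≤ e s := by
    intro s hs
    by_cases hss : s = s₁
    · subst hss; exact le_refl _
    · have h' : DiGraph.dOm H ω s₁ v ≤ DiGraph.dOm H ω s v := by
        rcases hvor.2 s hs hss with h | ⟨h, _⟩
        · exact h.le
        · exact h.le
      rw [hdOm, hdOm] at h'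
      exact_mod_cast h'
  have hkey : e s₁ ≤ G.dist q v := by
    apply DiGraph.le_dist
    intro l hl
    obtain ⟨s0, hs0, hs0l⟩ := hi l hl
    obtain ⟨l₁, s, l₂, rfl, hs, hl₂⟩ :=
      DiGraph.exists_last_split (↑S : Set V) l ⟨s0, hs0l, by exact_mod_cast hs0⟩
    have hsS : s ∈ S := by exact_mod_cast hs
    obtain ⟨hpre, hsuf⟩ := DiGraph.isWalk_split l₁ hl
    have hH : H.IsWalk s v (s :: l₂) := hii _ hl l₁ s l₂ rfl hsS hl₂
    have h1 : G.dist q s ≤ ENNReal.ofReal (G.walkLen (l₁ ++ [s])) := DiGraph.dist_le hpre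
    have h2 : H.dist s v ≤ ENNReal.ofReal (G.walkLen (s :: l₂)) := by
      have := DiGraph.dist_le hH
      rwa [DiGraph.walkLen_eq_of_len_eq hlen] at this
    calc e s₁ ≤ e s := hvor' s hsS
      _ ≤ ENNReal.ofReal (G.walkLen (l₁ ++ [s])) + ENNReal.ofReal (G.walkLen (s :: l₂)) :=
          add_le_add h1 h2
      _ = ENNReal.ofReal (G.walkLen (l₁ ++ [s]) + G.walkLen (s :: l₂)) :=
          (ENNReal.ofReal_add (DiGraph.walkLen_nonneg hpos hpre)
            (DiGraph.walkLen_nonneg hpos hsuf)).symm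
      _ = ENNReal.ofReal (G.walkLen (l₁ ++ s :: l₂)) := by rw [DiGraph.walkLen_append G s l₂ l₁]
  have h2 : ∀ s ∈ S, ((G.dist q v : ℝ≥0∞) : EReal) ≤ ω s + ((D s : ℝ) : EReal) := by
    intro s hs
    have htri : G.dist q v ≤ G.dist q s + G.dist s v := DiGraph.dist_triangle G hpos q s v
    calc ((G.dist q v : ℝ≥0∞) : EReal)
        ≤ (((G.dist q s + G.dist s v : ℝ≥0∞)) : EReal) := by exact_mod_cast htri
      _ = ((G.dist q s : ℝ≥0∞) : EReal) + ((G.dist s v : ℝ≥0∞) : EReal) :=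
          EReal.coe_ennreal_add _ _
      _ ≤ ω s + ((D s : ℝ) : EReal) := by
          rw [hω]
          exact add_le_add (le_refl _) (hD s hs).1
  have h1 : ω s₁ + ((D s₁ : ℝ) : EReal) = ((G.dist q v : ℝ≥0∞) : EReal) := by
    apply le_antisymm
    · calc ω s₁ + ((D s₁ : ℝ) : EReal)
          ≤ ω s₁ + ((H.dist s₁ v : ℝ≥0∞) : EReal) := add_le_add (le_refl _) (hD s₁ hs₁).2
        _ = ((e s₁ : ℝ≥0∞) : EReal) := by rw [hω, he, EReal.coe_ennreal_add]
        _ ≤ ((G.dist q v : ℝ≥0∞) : EReal) := by exact_mod_cast hkey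
    · exact h2 s₁ hs₁
  exact ⟨h1, h2, fun s₂ hs₂ => by rw [h1]; exact min_eq_left (h2 s₂ hs₂)⟩
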